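/- Let S be a finite set, E ⊆ FreeGroup(S) a finite subset, and let X and Y be finite FreeGroup(S)-sets with |X| = |Y| = n. Define the local defect L_E(X) = (1/n)·|{(x,w) ∈ X×E : w·x ≠ x}| and the distance d_S(X,Y) = min over bijections f : X → Y of (1/n)·|{(s,x) ∈ S×X : f(s·x) ≠ s·f(x)}|. Then L_E(Y) ≤ L_E(X) + (Σ_{w∈E} |w|) · d_S(X,Y), where |w| denotes the word length of w. -/

import Mathlib

open Finset
open scoped Classical

section aux
variable {S X Y : Type} [Fintype S] [Fintype X] [Fintype Y]

noncomputable def bSet (ΦX : FreeGroup S →* Equiv.Perm X) (ΦY : FreeGroup S →* Equiv.Perm Y)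
    (f : X ≃ Y) (w : FreeGroup S) : Finset X :=
  Finset.univ.filter (fun x => f (ΦX w x) ≠ ΦY w (f x))

noncomputable def pairBad (ΦX : FreeGroup S →* Equiv.Perm X) (ΦY : FreeGroup S →* Equiv.Perm Y)
    (f : X ≃ Y) : Finset (S × X) :=
  Finset.univ.filter (fun p => f (ΦX (FreeGroup.of p.1) p.2) ≠ ΦY (FreeGroup.of p.1) (f p.2))

variable (ΦX : FreeGroup S →* Equiv.Perm X) (ΦY : FreeGroup S →* Equiv.Perm Y) (f : X ≃ Y)

lemma mem_bSet {w : FreeGroup S} {x : X} :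
    x ∈ bSet ΦX ΦY f w ↔ f (ΦX w x) ≠ ΦY w (f x) := by
  simp [bSet]

lemma bSet_mul (u v : FreeGroup S) :
    (bSet ΦX ΦY f (u * v)).card ≤ (bSet ΦX ΦY f u).card + (bSet ΦX ΦY f v).card := by
  have hsub : bSet ΦX ΦY f (u * v) ⊆
      (bSet ΦX ΦY f u).image ((ΦX v)⁻¹ : Equiv.Perm X) ∪ bSet ΦX ΦY f v := by
    intro x hx
    rw [mem_bSet] at hx
    rw [mem_union, mem_image]
    by_cases h1 : f (ΦX v x) = ΦY v (f x)
    · left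
      refine ⟨ΦX v x, ?_, Equiv.symm_apply_apply _ _⟩
      rw [mem_bSet]
      intro h
      exact hx (by rw [map_mul, map_mul, Equiv.Perm.mul_apply, Equiv.Perm.mul_apply, h, h1])
    · right; rw [mem_bSet]; exact h1
  calc (bSet ΦX ΦY f (u * v)).card
      ≤ ((bSet ΦX ΦY f u).image ((ΦX v)⁻¹ : Equiv.Perm X) ∪ bSet ΦX ΦY f v).card :=
        Finset.card_le_card hsub
    _ ≤ ((bSet ΦX ΦY f u).image ((ΦX v)⁻¹ : Equiv.Perm X)).card + (bSet ΦX ΦY f v).card :=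
        Finset.card_union_le _ _
    _ = (bSet ΦX ΦY f u).card + (bSet ΦX ΦY f v).card := by
        rw [Finset.card_image_of_injective _ (Equiv.injective _)]

lemma bSet_letter (s : S) (b : Bool) :
    (bSet ΦX ΦY f (FreeGroup.mk [(s, b)])).card ≤ (pairBad ΦX ΦY f).card := by
  cases b
  · -- inverse letter
    have hkey : FreeGroup.mk [(s, false)] = (FreeGroup.of s)⁻¹ := by
      simp [FreeGroup.inv_mk, FreeGroup.of, FreeGroup.invRev]
    refine Finset.card_le_card_of_injOn (fun x => (s, (ΦX (FreeGroup.of s))⁻¹ x)) ?_ ?_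
    · intro x hx
      rw [Finset.mem_coe, mem_bSet, hkey] at hx
      simp only [pairBad, Finset.mem_coe, mem_filter, mem_univ, true_and]
      intro h
      apply hx
      rw [map_inv]
      have := congrArg ((ΦY (FreeGroup.of s))⁻¹ : Equiv.Perm Y) h
      simpa using this.symm
    · intro a _ b _ hab
      have := congrArg Prod.snd hab
      exact (Equiv.injective _) this
  · -- positive letter
    have hkey : FreeGroup.mk [(s, true)] = FreeGroup.of s := rfl
    refine Finset.card_le_card_of_injOn (fun x => (s, x)) ?_ ?_
    · intro x hx
      rw [Finset.mem_coe, mem_bSet, hkey] at hx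
      simp only [pairBad, Finset.mem_coe, mem_filter, mem_univ, true_and]
      exact hx
    · intro a _ b _ hab
      exact congrArg Prod.snd hab

lemma bSet_word (L : List (S × Bool)) :
    (bSet ΦX ΦY f (FreeGroup.mk L)).card ≤ L.length * (pairBad ΦX ΦY f).card := by
  induction L with
  | nil =>
      have : bSet ΦX ΦY f (FreeGroup.mk ([] : List (S × Bool))) = ∅ := by
        ext x
        rw [mem_bSet]
        simp [show FreeGroup.mk ([] : List (S × Bool)) = 1 from rfl]
      simp [this]
  | cons a L ih =>
      have hmk : FreeGroup.mk (a :: L) = FreeGroup.mk [a] * FreeGroup.mk L := by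
        rw [FreeGroup.mul_mk]; rfl
      calc (bSet ΦX ΦY f (FreeGroup.mk (a :: L))).card
          ≤ (bSet ΦX ΦY f (FreeGroup.mk [a])).card + (bSet ΦX ΦY f (FreeGroup.mk L)).card := by
            rw [hmk]; exact bSet_mul ΦX ΦY f _ _
        _ ≤ (pairBad ΦX ΦY f).card + L.length * (pairBad ΦX ΦY f).card :=
            Nat.add_le_add (bSet_letter ΦX ΦY f a.1 a.2) ih
        _ = (a :: L).length * (pairBad ΦX ΦY f).card := by
            simp [List.length_cons, Nat.succ_mul, Nat.add_comm]

lemma elt_bound [DecidableEq S] (w : FreeGroup S) :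
    (Finset.univ.filter (fun y : Y => ΦY w y ≠ y)).card ≤
      (Finset.univ.filter (fun x : X => ΦX w x ≠ x)).card +
        (FreeGroup.toWord w).length * (pairBad ΦX ΦY f).card := by
  have hsub : ∀ y ∈ Finset.univ.filter (fun y : Y => ΦY w y ≠ y),
      f.symm y ∈ (Finset.univ.filter (fun x : X => ΦX w x ≠ x)) ∪ bSet ΦX ΦY f w := by
    intro y hy
    rw [mem_filter] at hy
    rw [mem_union]
    by_cases hb : f.symm y ∈ bSet ΦX ΦY f w
    · right; exact hb
    · left
      rw [mem_bSet, not_not] at hb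
      rw [mem_filter]
      refine ⟨Finset.mem_univ _, fun h => hy.2 ?_⟩
      have h2 := congrArg f h
      rwa [hb, Equiv.apply_symm_apply] at h2
  calc (Finset.univ.filter (fun y : Y => ΦY w y ≠ y)).card
      ≤ ((Finset.univ.filter (fun x : X => ΦX w x ≠ x)) ∪ bSet ΦX ΦY f w).card :=
        Finset.card_le_card_of_injOn f.symm hsub
          (fun a _ b _ h => f.symm.injective h)
    _ ≤ (Finset.univ.filter (fun x : X => ΦX w x ≠ x)).card + (bSet ΦX ΦY f w).card :=
        Finset.card_union_le _ _
    _ ≤ _ := by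
        refine Nat.add_le_add_left ?_ _
        have := bSet_word ΦX ΦY f (FreeGroup.toWord w)
        rwa [FreeGroup.mk_toWord] at this

end aux

theorem stmt13 {S X Y : Type} [Fintype S] [DecidableEq S] [Fintype X] [Fintype Y]
    (E : Finset (FreeGroup S))
    (ΦX : FreeGroup S →* Equiv.Perm X) (ΦY : FreeGroup S →* Equiv.Perm Y)
    (hcard : Fintype.card X = Fintype.card Y) (f : X ≃ Y) :
    (∑ w ∈ E, (Nat.card {y : Y // ΦY w y ≠ y} : ℝ)) / Fintype.card Y ≤
      (∑ w ∈ E, (Nat.card {x : X // ΦX w x ≠ x} : ℝ)) / Fintype.card X +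
      (∑ w ∈ E, ((FreeGroup.toWord w).length : ℝ)) *
        ((Nat.card {p : S × X //
            f (ΦX (FreeGroup.of p.1) p.2) ≠ ΦY (FreeGroup.of p.1) (f p.2)} : ℝ)
          / Fintype.card X) := by
  classical
  have hY : ∀ w : FreeGroup S,
      Nat.card {y : Y // ΦY w y ≠ y} = (Finset.univ.filter (fun y : Y => ΦY w y ≠ y)).card := by
    intro w
    rw [Nat.card_eq_fintype_card]
    convert Fintype.card_subtype _ using 2
  have hX : ∀ w : FreeGroup S,
      Nat.card {x : X // ΦX w x ≠ x} = (Finset.univ.filter (fun x : X => ΦX w x ≠ x)).card := by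
    intro w
    rw [Nat.card_eq_fintype_card]
    convert Fintype.card_subtype _ using 2
  have hP : Nat.card {p : S × X //
      f (ΦX (FreeGroup.of p.1) p.2) ≠ ΦY (FreeGroup.of p.1) (f p.2)} = (pairBad ΦX ΦY f).card := by
    rw [Nat.card_eq_fintype_card, pairBad]
    convert Fintype.card_subtype _ using 2
  have hnat : ∑ w ∈ E, Nat.card {y : Y // ΦY w y ≠ y} ≤
      (∑ w ∈ E, Nat.card {x : X // ΦX w x ≠ x}) +
        (∑ w ∈ E, (FreeGroup.toWord w).length) * (pairBad ΦX ΦY f).card := by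
    rw [Finset.sum_mul, ← Finset.sum_add_distrib]
    refine Finset.sum_le_sum fun w _ => ?_
    rw [hY w, hX w]
    exact elt_bound ΦX ΦY f w
  rcases Nat.eq_zero_or_pos (Fintype.card X) with h0 | hpos
  · haveI : IsEmpty X := Fintype.card_eq_zero_iff.mp h0
    haveI : IsEmpty Y := Fintype.card_eq_zero_iff.mp (hcard ▸ h0)
    simp [Nat.card_of_isEmpty]
  · rw [← hcard, hP]
    rw [mul_div_assoc'] at *
    rw [← add_div]
    have hc : (0:ℝ) < (Fintype.card X : ℝ) := by exact_mod_cast hpos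
    rw [div_le_div_iff_of_pos_right hc] at *
    calc (∑ w ∈ E, (Nat.card {y : Y // ΦY w y ≠ y} : ℝ))
        = ((∑ w ∈ E, Nat.card {y : Y // ΦY w y ≠ y} : ℕ) : ℝ) := by push_cast; ring
      _ ≤ (((∑ w ∈ E, Nat.card {x : X // ΦX w x ≠ x}) +
            (∑ w ∈ E, (FreeGroup.toWord w).length) * (pairBad ΦX ΦY f).card : ℕ) : ℝ) := by
          exact_mod_cast hnat
      _ = _ := by push_cast; ring
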